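/- Let E be a Banach space and assume: for every separable Banach space Z finitely representable in E, every increasing chain Z₁ ⊆ Z₂ ⊆ ⋯ of finite-dimensional subspaces with dense union in Z, every ε ∈ (0,1), and every (1+ε^n)-isomorphic embedding iₙ : Zₙ → E that can always be extended to a (1+ε^{n+1})-isomorphic embedding i_{n+1} : Z_{n+1} → E with i_{n+1}|_{Zₙ} = iₙ. Then for every δ > 2ε there exists an isomorphic embedding u : Z → E with ‖u‖·‖u⁻¹‖ ≤ 1 + δ. -/

import Mathlib

/-- `f` is a `c`-isomorphic embedding (i.e. `‖f‖·‖f⁻¹‖ ≤ c` up to scaling):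
for some `a > 0`, `a‖x‖ ≤ ‖f x‖ ≤ a·c·‖x‖` for all `x`. -/
def IsEmbeddingWith {Z E : Type*} [NormedAddCommGroup Z] [NormedSpace ℝ Z]
    [NormedAddCommGroup E] [NormedSpace ℝ E] (c : ℝ) (f : Z →ₗ[ℝ] E) : Prop :=
  ∃ a : ℝ, 0 < a ∧ ∀ x : Z, a * ‖x‖ ≤ ‖f x‖ ∧ ‖f x‖ ≤ a * c * ‖x‖

/-- `X` is `l`-finitely representable in `Y`. -/
def LambdaFinRep (l : ℝ) (X Y : Type*)
    [NormedAddCommGroup X] [NormedSpace ℝ X]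
    [NormedAddCommGroup Y] [NormedSpace ℝ Y] : Prop :=
  ∀ A : Submodule ℝ X, FiniteDimensional ℝ A →
    ∃ (B : Submodule ℝ Y) (u : A ≃L[ℝ] B),
      ‖(u : A →L[ℝ] B)‖ * ‖(u.symm : B →L[ℝ] A)‖ < l

/-- `X` is finitely representable in `Y` (`X <_f Y`). -/
def FinRep (X Y : Type*)
    [NormedAddCommGroup X] [NormedSpace ℝ X]
    [NormedAddCommGroup Y] [NormedSpace ℝ Y] : Prop :=
  ∀ l : ℝ, 1 < l → LambdaFinRep l X Y

/-- The one-sided shuttle (back-and-forth) limit argument: let `Z` be a separable Banach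
space finitely representable in `E`, `Z₁ ⊆ Z₂ ⊆ ⋯` an increasing chain of
finite-dimensional subspaces with dense union, `ε ∈ (0,1)`, and `iₙ : Zₙ → E` a compatible
chain of `(1+εⁿ)`-isomorphic embeddings (each `i_{n+1}` extending `iₙ`).  Then for every
`δ > 2ε` there is an isomorphic embedding `u : Z → E` with `‖u‖·‖u⁻¹‖ ≤ 1 + δ`. -/
theorem shuttle_limit_embedding {Z E : Type*}
    [NormedAddCommGroup Z] [NormedSpace ℝ Z] [CompleteSpace Z]
    [TopologicalSpace.SeparableSpace Z]
    [NormedAddCommGroup E] [NormedSpace ℝ E] [CompleteSpace E]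
    (hZE : FinRep Z E)
    (Zn : ℕ → Submodule ℝ Z) (hmono : Monotone Zn)
    (hfd : ∀ n, FiniteDimensional ℝ (Zn n))
    (hdense : Dense ((⨆ n, Zn n : Submodule ℝ Z) : Set Z))
    (ε : ℝ) (hε0 : 0 < ε) (hε1 : ε < 1)
    (i : ∀ n, (Zn n) →ₗ[ℝ] E)
    (hemb : ∀ n, IsEmbeddingWith (1 + ε ^ n) (i n))
    (hcompat : ∀ (n : ℕ) (x : Zn n),
      i (n + 1) (Submodule.inclusion (hmono (Nat.le_succ n)) x) = i n x)
    (δ : ℝ) (hδ : 2 * ε < δ) :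
    ∃ u : Z →ₗ[ℝ] E, IsEmbeddingWith (1 + δ) u := by
  classical
  -- the maps agree along the chain
  have hext : ∀ m n (h : m ≤ n) (x : Z) (hx : x ∈ Zn m),
      i n ⟨x, hmono h hx⟩ = i m ⟨x, hx⟩ := by
    intro m n h
    induction n, h using Nat.le_induction with
    | base => intro x hx; rfl
    | succ n hmn ih =>
      intro x hx
      have hc := hcompat n ⟨x, hmono hmn hx⟩
      have h2 : Submodule.inclusion (hmono (Nat.le_succ n)) (⟨x, hmono hmn hx⟩ : Zn n)
          = ⟨x, hmono (Nat.le_succ_of_le hmn) hx⟩ := rfl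
      rw [h2] at hc
      have : i (n+1) ⟨x, hmono (Nat.le_succ_of_le hmn) hx⟩ = i n ⟨x, hmono hmn hx⟩ := hc
      rw [show (⟨x, hmono (by omega : m ≤ n+1) hx⟩ : Zn (n+1))
        = ⟨x, hmono (Nat.le_succ_of_le hmn) hx⟩ from rfl, this, ih x hx]
  have hagree : ∀ (x : Z) m n (hm : x ∈ Zn m) (hn : x ∈ Zn n),
      i m ⟨x, hm⟩ = i n ⟨x, hn⟩ := by
    intro x m n hm hn
    rcases le_total m n with h | h
    · rw [← hext m n h x hm]
    · rw [← hext n m h x hn]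
  set D : Submodule ℝ Z := ⨆ n, Zn n with hDdef
  have hDmem : ∀ x : D, ∃ n, (x : Z) ∈ Zn n := fun x =>
    (Submodule.mem_iSup_of_directed Zn hmono.directed_le).mp x.2
  choose nn hnn using hDmem
  let F : D → E := fun x => i (nn x) ⟨(x : Z), hnn x⟩
  have hFeq : ∀ (x : D) (m) (hm : (x : Z) ∈ Zn m), F x = i m ⟨(x : Z), hm⟩ :=
    fun x m hm => hagree _ _ _ _ _
  have hadd : ∀ x y : D, F (x + y) = F x + F y := by
    intro x y
    set k := max (nn x) (nn y) with hk
    have hx : (x : Z) ∈ Zn k := hmono (le_max_left _ _) (hnn x)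
    have hy : (y : Z) ∈ Zn k := hmono (le_max_right _ _) (hnn y)
    have hxy : ((x + y : D) : Z) ∈ Zn k := add_mem hx hy
    rw [hFeq (x+y) k hxy, hFeq x k hx, hFeq y k hy, ← map_add]
    congr 1
  have hsmul : ∀ (c : ℝ) (x : D), F (c • x) = c • F x := by
    intro c x
    have hx : (x : Z) ∈ Zn (nn x) := hnn x
    have hcx : ((c • x : D) : Z) ∈ Zn (nn x) := Submodule.smul_mem _ _ hx
    rw [hFeq (c • x) _ hcx, hFeq x _ hx, ← map_smul]
    congr 1
  let j : D →ₗ[ℝ] E := ⟨⟨F, hadd⟩, hsmul⟩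
  choose a ha0 hab using hemb
  -- lower bound on each piece
  have hlow : ∀ (x : D) (n) (hx : (x : Z) ∈ Zn n), a n * ‖(x : Z)‖ ≤ ‖j x‖ := by
    intro x n hx
    have := (hab n ⟨(x : Z), hx⟩).1
    rw [Submodule.coe_norm] at this
    simpa [j, hFeq x n hx] using this
  have hup : ∀ (x : D) (n) (hx : (x : Z) ∈ Zn n),
      ‖j x‖ ≤ a n * (1 + ε ^ n) * ‖(x : Z)‖ := by
    intro x n hx
    have := (hab n ⟨(x : Z), hx⟩).2
    rw [Submodule.coe_norm] at this
    simpa [j, hFeq x n hx] using this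
  -- key: the ratio is constant
  have hratio : ∀ x y : D, ‖j x‖ * ‖(y : Z)‖ ≤ ‖j y‖ * ‖(x : Z)‖ := by
    intro x y
    have htendε : Filter.Tendsto (fun n : ℕ => ε ^ n) Filter.atTop (nhds 0) :=
      tendsto_pow_atTop_nhds_zero_of_lt_one hε0.le hε1
    have htend : Filter.Tendsto (fun n : ℕ => (1 + ε ^ n) * (‖j y‖ * ‖(x : Z)‖))
        Filter.atTop (nhds (‖j y‖ * ‖(x : Z)‖)) := by
      have : Filter.Tendsto (fun n : ℕ => (1 + ε ^ n)) Filter.atTop (nhds 1) := by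
        simpa using (tendsto_const_nhds.add htendε)
      simpa using this.mul_const (‖j y‖ * ‖(x : Z)‖)
    refine ge_of_tendsto htend ?_
    filter_upwards [Filter.eventually_ge_atTop (max (nn x) (nn y))] with n hn
    have hx : (x : Z) ∈ Zn n := hmono (le_trans (le_max_left _ _) hn) (hnn x)
    have hy : (y : Z) ∈ Zn n := hmono (le_trans (le_max_right _ _) hn) (hnn y)
    have h1 := hup x n hx
    have h2 := hlow y n hy
    have hεn : (0:ℝ) < 1 + ε ^ n := by positivity
    nlinarith [norm_nonneg ((x : Z)), norm_nonneg ((y : Z)), (ha0 n),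
      mul_le_mul_of_nonneg_right h1 (norm_nonneg ((y : Z))),
      mul_le_mul_of_nonneg_left h2 (mul_nonneg hεn.le (norm_nonneg ((x : Z))))]
  by_cases hD : ∀ x : D, (x : Z) = 0
  · -- degenerate case : Z = {0}
    have hz : ∀ z : Z, z = 0 := by
      intro z
      have h1 : (D : Set Z) ⊆ ({0} : Set Z) := fun w hw => hD ⟨w, hw⟩
      have h2 : closure (D : Set Z) ⊆ closure ({0} : Set Z) := closure_mono h1
      rw [hdense.closure_eq, isClosed_singleton.closure_eq] at h2
      exact h2 (Set.mem_univ z)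
    refine ⟨0, 1, one_pos, fun x => ?_⟩
    simp [hz x]
  · push_neg at hD
    obtain ⟨x₀, hx₀⟩ := hD
    have hx₀n : (0:ℝ) < ‖(x₀ : Z)‖ := norm_pos_iff.mpr hx₀
    have hjx₀ : (0:ℝ) < ‖j x₀‖ :=
      lt_of_lt_of_le (mul_pos (ha0 _) hx₀n) (hlow x₀ (nn x₀) (hnn x₀))
    set α : ℝ := ‖j x₀‖ / ‖(x₀ : Z)‖ with hαdef
    have hα : 0 < α := div_pos hjx₀ hx₀n
    have hnorm : ∀ x : D, ‖j x‖ = α * ‖(x : Z)‖ := by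
      intro x
      have heq : ‖j x‖ * ‖(x₀ : Z)‖ = ‖j x₀‖ * ‖(x : Z)‖ :=
        le_antisymm (hratio x x₀) (hratio x₀ x)
      rw [hαdef, div_mul_eq_mul_div, eq_div_iff hx₀n.ne']
      linarith [heq]
    let jL : D →L[ℝ] E := j.mkContinuous α (fun x => by
      rw [hnorm x, Submodule.coe_norm])
    have hdr : DenseRange (D.subtypeL : D → Z) := by
      have hrange : Set.range ((↑) : D → Z) = (D : Set Z) := Subtype.range_coe
      unfold DenseRange
      rw [show Set.range (D.subtypeL : D → Z) = Set.range ((↑) : D → Z) from rfl, hrange]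
      exact hdense
    have hui : IsUniformInducing (D.subtypeL : D → Z) :=
      isometry_subtype_coe.isUniformInducing
    let u : Z →L[ℝ] E := jL.extend D.subtypeL
    have hue : ∀ x : D, u ((x : Z)) = jL x := fun x =>
      ContinuousLinearMap.extend_eq (f := jL) (e := D.subtypeL) hdr hui x
    have hnu : ∀ z : Z, ‖u z‖ = α * ‖z‖ := by
      have hclosed : IsClosed {z : Z | ‖u z‖ = α * ‖z‖} :=
        isClosed_eq u.continuous.norm (continuous_const.mul continuous_norm)
      intro z
      refine hdr.induction_on z hclosed ?_
      intro x
      show ‖u ((x : Z))‖ = α * ‖(x : Z)‖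
      rw [hue x]
      have : ‖jL x‖ = ‖j x‖ := rfl
      rw [this, hnorm x]
    refine ⟨u.toLinearMap, α, hα, fun x => ?_⟩
    have hx : ‖u.toLinearMap x‖ = α * ‖x‖ := hnu x
    constructor
    · rw [hx]
    · rw [hx]
      have hδ0 : (0:ℝ) < δ := by nlinarith
      nlinarith [norm_nonneg x, mul_nonneg (mul_nonneg hα.le hδ0.le) (norm_nonneg x)]
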